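/- arXiv:1105.4137 — 2 statements merged into one kernel-verified Lean document; each statement's English description precedes it below -/
import Mathlib

section
/- Let u be a smooth function on an open subset of ℝ^{1+3} contained in {(t,x) : t > |x| > 0}, and let (t,x) be a point of this set; set T = √(t² − |x|²), r = |x|, ∂̄_i u = ∂_i u + (x^i/t)∂_t u and ∂̸_i u = ∂_i u + (x^i/r)∂_t u. Then Σ_{i=1}³ |∂̸_i u|² ≤ 2 Σ_{i=1}³ |∂̄_i u|² + 2 ((T/t) ∂_t u)². In particular the tangential (to the light cone) derivatives are controlled pointwise by the hyperboloidal energy density. -/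
open MeasureTheory

noncomputable section

/-- The partial derivative `∂_α` on `ℝ^{1+3}`; index `0` is the time variable `t`. -/
def pd (α : Fin 4) (u : (Fin 4 → ℝ) → ℝ) : (Fin 4 → ℝ) → ℝ :=
  fun p => fderiv ℝ u p (Pi.single α 1)

/-- The Euclidean length `r = |x|` of the spatial part of a point of `ℝ^{1+3}`. -/
def rad (p : Fin 4 → ℝ) : ℝ := Real.sqrt (∑ i : Fin 3, p i.succ ^ 2)

/-- The Lorentz boost `H_j = t ∂_j + x^j ∂_t`. -/
def Lb (j : Fin 3) (u : (Fin 4 → ℝ) → ℝ) : (Fin 4 → ℝ) → ℝ :=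
  fun p => p 0 * pd j.succ u p + p j.succ * pd 0 u p

/-- The wave operator `□ = ∂_t² - Σ_i ∂_i²`. -/
def box (u : (Fin 4 → ℝ) → ℝ) : (Fin 4 → ℝ) → ℝ :=
  fun p => pd 0 (pd 0 u) p - ∑ i : Fin 3, pd i.succ (pd i.succ u) p

/-- The point `(√(T²+|x|²), x)` of the hyperboloid `H_T` over `x ∈ ℝ³`. -/
def hyp (T : ℝ) (x : Fin 3 → ℝ) : Fin 4 → ℝ :=
  Fin.cons (Real.sqrt (T ^ 2 + ∑ i, x i ^ 2)) x

/-- The hyperboloidal energy `E_m(T,u)` with mass parameter `a`. -/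
def Em (a T : ℝ) (u : (Fin 4 → ℝ) → ℝ) : ℝ :=
  ∫ x : Fin 3 → ℝ,
    ((pd 0 u (hyp T x)) ^ 2 + ∑ i : Fin 3, (pd i.succ u (hyp T x)) ^ 2
      + ∑ i : Fin 3,
          (2 * (hyp T x) i.succ / (hyp T x) 0) * pd 0 u (hyp T x) * pd i.succ u (hyp T x)
      + 2 * a ^ 2 * (u (hyp T x)) ^ 2)
/-- the light-cone-tangential derivatives `∂̸_i u = ∂_i u + (x^i/r) ∂_t u`
are controlled pointwise by the hyperboloidal energy density:
`Σ_i |∂̸_i u|² ≤ 2 Σ_i |∂̄_i u|² + 2 ((T/t) ∂_t u)²` on `{t > |x| > 0}`. -/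
theorem lightcone_tangential_controlled_by_energy_density
    (U : Set (Fin 4 → ℝ)) (hU : IsOpen U)
    (hreg : U ⊆ {p | 0 < rad p ∧ rad p < p 0})
    (u : (Fin 4 → ℝ) → ℝ) (hu : ContDiffOn ℝ (⊤ : ℕ∞) u U)
    (p : Fin 4 → ℝ) (hp : p ∈ U) :
    ∑ i : Fin 3, (pd i.succ u p + (p i.succ / rad p) * pd 0 u p) ^ 2
      ≤ 2 * ∑ i : Fin 3, (pd i.succ u p + (p i.succ / p 0) * pd 0 u p) ^ 2
        + 2 * ((Real.sqrt ((p 0) ^ 2 - rad p ^ 2) / p 0) * pd 0 u p) ^ 2 := by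
  obtain ⟨hr, hrt⟩ := hreg hp
  set r := rad p with hrdef
  set t := p 0 with htdef
  set b := pd 0 u p with hbdef
  have ht : 0 < t := lt_trans hr hrt
  have hsum : ∑ i : Fin 3, p i.succ ^ 2 = r ^ 2 := by
    rw [hrdef, rad, Real.sq_sqrt]
    positivity
  have hsq : Real.sqrt (t ^ 2 - r ^ 2) ^ 2 = t ^ 2 - r ^ 2 :=
    Real.sq_sqrt (by nlinarith)
  have key : ∀ i : Fin 3,
      (pd i.succ u p + (p i.succ / r) * b) ^ 2
        ≤ 2 * (pd i.succ u p + (p i.succ / t) * b) ^ 2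
          + 2 * ((1 / r - 1 / t) * b) ^ 2 * p i.succ ^ 2 := by
    intro i
    have heq : pd i.succ u p + (p i.succ / r) * b
        = (pd i.succ u p + (p i.succ / t) * b) + (1 / r - 1 / t) * b * p i.succ := by
      field_simp
      ring
    rw [heq]
    nlinarith [sq_nonneg ((pd i.succ u p + (p i.succ / t) * b)
      - (1 / r - 1 / t) * b * p i.succ)]
  calc ∑ i : Fin 3, (pd i.succ u p + (p i.succ / r) * b) ^ 2
      ≤ ∑ i : Fin 3, (2 * (pd i.succ u p + (p i.succ / t) * b) ^ 2
          + 2 * ((1 / r - 1 / t) * b) ^ 2 * p i.succ ^ 2) :=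
        Finset.sum_le_sum fun i _ => key i
    _ = 2 * ∑ i : Fin 3, (pd i.succ u p + (p i.succ / t) * b) ^ 2
          + 2 * ((1 / r - 1 / t) * b) ^ 2 * r ^ 2 := by
        rw [Finset.sum_add_distrib, ← Finset.mul_sum, ← Finset.mul_sum, hsum]
    _ ≤ 2 * ∑ i : Fin 3, (pd i.succ u p + (p i.succ / t) * b) ^ 2
          + 2 * ((Real.sqrt (t ^ 2 - r ^ 2) / t) * b) ^ 2 := by
        have h1 : ((1 / r - 1 / t) * b) ^ 2 * r ^ 2 = ((t - r) / t) ^ 2 * b ^ 2 := by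
          field_simp
        have h2 : ((Real.sqrt (t ^ 2 - r ^ 2) / t) * b) ^ 2
            = (t ^ 2 - r ^ 2) / t ^ 2 * b ^ 2 := by
          rw [mul_pow, div_pow, hsq]
        have h3 : ((t - r) / t) ^ 2 ≤ (t ^ 2 - r ^ 2) / t ^ 2 := by
          rw [div_pow, div_le_div_iff₀ (by positivity) (by positivity)]
          nlinarith [mul_pos (mul_pos hr (sub_pos.mpr hrt)) (mul_pos ht ht)]
        nlinarith [h1, h2, h3, sq_nonneg b]
end
end

section
/- Fix B > 0 and p ≥ 1. There exists a constant C = C(p,B) > 0 such that for every smooth function u on an open subset of ℝ^{1+3} and every point (t,x) of the domain satisfying |x| ≤ t − 1 and t² − |x|² ≥ (B+1)²: (a) Σ_{i=1}³ Σ_{|J| = p} |Z^J ∂̄_i u| ≤ C Σ_{|K| ≤ p} Σ_{j=1}³ |∂̄_j Z^K u|, where ∂̄_i u = ∂_i u + (x^i/t)∂_t u; (b) for every sequence I with |I| ≤ p and every α ∈ {0,1,2,3}: |Z^I ∂_α u| ≤ |∂_α Z^I u| + C Σ_{|J| < |I|} Σ_{β=0}³ |∂_β Z^J u|. Here the sums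 run over finite sequences of indices in {1,…,7} of the indicated lengths. -/
open MeasureTheory

noncomputable section

/-- The admissible fields `Z`: the coordinate derivatives `∂_α` (`Sum.inl α`)
and the Lorentz boosts `H_j` (`Sum.inr j`). -/
def Zop (z : Fin 4 ⊕ Fin 3) (u : (Fin 4 → ℝ) → ℝ) : (Fin 4 → ℝ) → ℝ :=
  match z with
  | Sum.inl α => pd α u
  | Sum.inr j => Lb j u

/-- The iterated field `Z^I` for a finite sequence `I`. -/
def ZI : List (Fin 4 ⊕ Fin 3) → ((Fin 4 → ℝ) → ℝ) → ((Fin 4 → ℝ) → ℝ)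
  | [], u => u
  | z :: I, u => Zop z (ZI I u)

/-- The hyperboloid-tangential derivative `∂̄_i u = ∂_i u + (x^i/t)∂_t u`, as an
operator on functions. -/
def db (i : Fin 3) (u : (Fin 4 → ℝ) → ℝ) : (Fin 4 → ℝ) → ℝ :=
  fun p => pd i.succ u p + (p i.succ / p 0) * pd 0 u p

namespace Aux

abbrev fn := (Fin 4 → ℝ) → ℝ
abbrev idx := Fin 4 ⊕ Fin 3

def Tpos : Set (Fin 4 → ℝ) := {p | 0 < p 0}

lemma isOpen_Tpos : IsOpen Tpos :=
  isOpen_lt continuous_const (continuous_apply 0)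

/-- coefficient functions -/
def gg : fn := fun p => (p 0)⁻¹
def ff (b : Fin 3) : fn := fun p => p b.succ * gg p

-- smoothness of basics
lemma contDiff_proj (β : Fin 4) : ContDiff ℝ (⊤:ℕ∞) (fun p : Fin 4 → ℝ => p β) :=
  (ContinuousLinearMap.proj β : (Fin 4 → ℝ) →L[ℝ] ℝ).contDiff

lemma contDiffOn_gg : ContDiffOn ℝ (⊤:ℕ∞) gg Tpos := by
  apply ContDiffOn.inv ((contDiff_proj 0).contDiffOn)
  intro p hp; exact ne_of_gt hp

lemma contDiffOn_ff (b : Fin 3) : ContDiffOn ℝ (⊤:ℕ∞) (ff b) Tpos :=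
  ((contDiff_proj b.succ).contDiffOn).mul contDiffOn_gg

lemma contDiffOn_pd {V : Set (Fin 4 → ℝ)} (hV : IsOpen V) {u : fn}
    (hu : ContDiffOn ℝ (⊤:ℕ∞) u V) (α : Fin 4) : ContDiffOn ℝ (⊤:ℕ∞) (pd α u) V := by
  have h := hu.fderiv_of_isOpen hV (m := (⊤:ℕ∞)) (by exact_mod_cast le_top)
  exact h.clm_apply contDiffOn_const

lemma contDiffOn_Zop {V : Set (Fin 4 → ℝ)} (hV : IsOpen V) {u : fn}
    (hu : ContDiffOn ℝ (⊤:ℕ∞) u V) (z : idx) : ContDiffOn ℝ (⊤:ℕ∞) (Zop z u) V := by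
  cases z with
  | inl α => exact contDiffOn_pd hV hu α
  | inr j =>
      exact (((contDiff_proj 0).contDiffOn.mul (contDiffOn_pd hV hu j.succ)).add
        (((contDiff_proj j.succ).contDiffOn).mul (contDiffOn_pd hV hu 0)))

lemma contDiffOn_ZI {V : Set (Fin 4 → ℝ)} (hV : IsOpen V) {u : fn}
    (hu : ContDiffOn ℝ (⊤:ℕ∞) u V) (J : List idx) : ContDiffOn ℝ (⊤:ℕ∞) (ZI J u) V := by
  induction J with
  | nil => exact hu
  | cons z J ih => exact contDiffOn_Zop hV ih z

lemma db_eq_ff (b : Fin 3) (w : fn) : db b w = fun q => pd b.succ w q + ff b q * pd 0 w q := by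
  funext q
  rw [db, div_eq_mul_inv]
  rfl

lemma contDiffOn_db {V : Set (Fin 4 → ℝ)} (hV : IsOpen V) (hVT : V ⊆ Tpos) {u : fn}
    (hu : ContDiffOn ℝ (⊤:ℕ∞) u V) (b : Fin 3) : ContDiffOn ℝ (⊤:ℕ∞) (db b u) V := by
  rw [db_eq_ff]
  have h1 : ContDiffOn ℝ (⊤:ℕ∞) (ff b) V := (contDiffOn_ff b).mono hVT
  exact (contDiffOn_pd hV hu b.succ).add (h1.mul (contDiffOn_pd hV hu 0))

/-- `g ∂_t v`, the residual term in the commutator algebra. -/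
def gdt (v : fn) : fn := fun q => gg q * pd 0 v q

lemma contDiffOn_gdt {V : Set (Fin 4 → ℝ)} (hV : IsOpen V) (hVT : V ⊆ Tpos) {u : fn}
    (hu : ContDiffOn ℝ (⊤:ℕ∞) u V) : ContDiffOn ℝ (⊤:ℕ∞) (gdt u) V :=
  (contDiffOn_gg.mono hVT).mul (contDiffOn_pd hV hu 0)

lemma diffAt {V : Set (Fin 4 → ℝ)} (hV : IsOpen V) {u : fn}
    (hu : ContDiffOn ℝ (⊤:ℕ∞) u V) {p} (hp : p ∈ V) : DifferentiableAt ℝ u p :=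
  (hu.contDiffAt (hV.mem_nhds hp)).differentiableAt (by simp)

variable {V : Set (Fin 4 → ℝ)} {u v : fn} {p : Fin 4 → ℝ} {α β : Fin 4}

lemma pd_congr (hV : IsOpen V) (h : Set.EqOn u v V) {p} (hp : p ∈ V) (α : Fin 4) :
    pd α u p = pd α v p := by
  unfold pd
  rw [(h.eventuallyEq_of_mem (hV.mem_nhds hp)).fderiv_eq]

lemma Zop_congr (hV : IsOpen V) (h : Set.EqOn u v V) (z : idx) :
    Set.EqOn (Zop z u) (Zop z v) V := by
  intro p hp
  cases z with
  | inl α => exact pd_congr hV h hp α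
  | inr j => simp only [Zop, Lb, pd_congr hV h hp]

lemma ZI_congr (hV : IsOpen V) (h : Set.EqOn u v V) (J : List idx) :
    Set.EqOn (ZI J u) (ZI J v) V := by
  induction J with
  | nil => exact h
  | cons z J ih => exact Zop_congr hV ih z

lemma pd_add (hu : DifferentiableAt ℝ u p) (hv : DifferentiableAt ℝ v p) (α : Fin 4) :
    pd α (fun q => u q + v q) p = pd α u p + pd α v p := by
  unfold pd; rw [fderiv_fun_add hu hv]; rfl

lemma pd_mul (hu : DifferentiableAt ℝ u p) (hv : DifferentiableAt ℝ v p) (α : Fin 4) :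
    pd α (fun q => u q * v q) p = u p * pd α v p + v p * pd α u p := by
  unfold pd; rw [fderiv_fun_mul hu hv]; rfl

lemma pd_const (r : ℝ) (α : Fin 4) : pd α (fun _ => r) p = 0 := by
  unfold pd; rw [fderiv_fun_const]; rfl

lemma pd_proj (β α : Fin 4) : pd α (fun q : Fin 4 → ℝ => q β) p
    = if β = α then (1:ℝ) else 0 := by
  unfold pd
  have : fderiv ℝ (fun q : Fin 4 → ℝ => q β) p
      = (ContinuousLinearMap.proj β : (Fin 4 → ℝ) →L[ℝ] ℝ) :=
    (ContinuousLinearMap.proj β : (Fin 4 → ℝ) →L[ℝ] ℝ).fderiv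
  rw [this]
  simp [Pi.single_apply]

lemma pd_pd (hu : ContDiffAt ℝ (⊤:ℕ∞) u p) (α β : Fin 4) :
    pd α (pd β u) p = pd β (pd α u) p := by
  unfold pd
  have hsymm : IsSymmSndFDerivAt ℝ u p := hu.isSymmSndFDerivAt (by simp; exact WithTop.coe_le_coe.mpr le_top)
  have hd : DifferentiableAt ℝ (fderiv ℝ u) p := by
    have h2 : ContDiffAt ℝ (⊤:ℕ∞) (fderiv ℝ u) p := hu.fderiv_right (by exact_mod_cast le_top)
    exact h2.differentiableAt (by simp)
  have e1 : ∀ γ δ : Fin 4, fderiv ℝ (fun q => fderiv ℝ u q (Pi.single δ 1)) p (Pi.single γ 1)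
      = fderiv ℝ (fderiv ℝ u) p (Pi.single γ 1) (Pi.single δ 1) := by
    intro γ δ
    rw [fderiv_clm_apply hd (differentiableAt_const _)]
    simp
  rw [e1, e1, hsymm]

lemma diff_proj (β : Fin 4) : DifferentiableAt ℝ (fun q : Fin 4 → ℝ => q β) p :=
  ((contDiff_proj β).differentiable (by simp)).differentiableAt

lemma diff_gg (hp : p 0 ≠ 0) : DifferentiableAt ℝ gg p :=
  (diff_proj 0).inv hp

lemma diff_ff (b : Fin 3) (hp : p 0 ≠ 0) : DifferentiableAt ℝ (ff b) p :=
  (diff_proj b.succ).mul (diff_gg hp)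

lemma pd_gg (hp : p 0 ≠ 0) (α : Fin 4) :
    pd α gg p = -((if (0:Fin 4) = α then 1 else 0) * (gg p * gg p)) := by
  have h : HasFDerivAt gg
      ((-((p 0)^2)⁻¹) • (ContinuousLinearMap.proj 0 : (Fin 4 → ℝ) →L[ℝ] ℝ)) p := by
    have h1 := hasFDerivAt_inv' (𝕜 := ℝ) (R := ℝ) hp
    have h2 := h1.comp p (ContinuousLinearMap.proj 0 : (Fin 4 → ℝ) →L[ℝ] ℝ).hasFDerivAt
    refine HasFDerivAt.congr_fderiv h2 ?_
    ext v
    simp [ContinuousLinearMap.mulLeftRight_apply]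
    rw [sq, mul_inv]; ring
  unfold pd
  rw [h.fderiv]
  simp [Pi.single_apply, gg]
  by_cases hα : (0:Fin 4) = α
  · simp [← hα]; field_simp
  · have : ¬ (α = 0) := fun h' => absurd h'.symm hα
    simp [hα, this]

lemma pd_ff (hp : p 0 ≠ 0) (b : Fin 3) (α : Fin 4) :
    pd α (ff b) p = (if b.succ = α then 1 else 0) * gg p
      - (if (0:Fin 4) = α then 1 else 0) * (ff b p * gg p) := by
  unfold ff
  rw [pd_mul (diff_proj b.succ) (diff_gg hp), pd_gg hp, pd_proj]
  ring

lemma Lb_gg (hp : p 0 ≠ 0) (j : Fin 3) : Lb j gg p = -(ff j p * gg p) := by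
  unfold Lb
  rw [pd_gg hp, pd_gg hp]
  simp [(Fin.succ_ne_zero j).symm]
  unfold ff
  ring

lemma Lb_ff (hp : p 0 ≠ 0) (j b : Fin 3) :
    Lb j (ff b) p = (if b = j then 1 else 0) - ff j p * ff b p := by
  unfold Lb
  rw [pd_ff hp, pd_ff hp]
  simp [(Fin.succ_ne_zero j).symm, Fin.succ_inj, Fin.succ_ne_zero]
  by_cases hbj : b = j
  · simp [hbj]
    unfold ff gg
    field_simp
    ring
  · have : ¬ (j = b) := fun h => absurd h.symm hbj
    simp [hbj, this]
    unfold ff gg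
    ring

lemma Zop_add (z : idx) (hu : DifferentiableAt ℝ u p) (hv : DifferentiableAt ℝ v p) :
    Zop z (fun q => u q + v q) p = Zop z u p + Zop z v p := by
  cases z with
  | inl α => exact pd_add hu hv α
  | inr j =>
      show Lb _ _ _ = _
      unfold Lb
      rw [pd_add hu hv, pd_add hu hv]
      show _ = (p 0 * pd j.succ u p + p j.succ * pd 0 u p)
        + (p 0 * pd j.succ v p + p j.succ * pd 0 v p)
      ring

lemma Zop_mul (z : idx) (hu : DifferentiableAt ℝ u p) (hv : DifferentiableAt ℝ v p) :
    Zop z (fun q => u q * v q) p = Zop z u p * v p + u p * Zop z v p := by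
  cases z with
  | inl α =>
      show pd α (fun q => u q * v q) p = _
      rw [pd_mul hu hv α]; simp only [Zop]; ring
  | inr j =>
      show Lb _ _ _ = _
      unfold Lb
      rw [pd_mul hu hv, pd_mul hu hv]
      show _ = (p 0 * pd j.succ u p + p j.succ * pd 0 u p) * v p
        + u p * (p 0 * pd j.succ v p + p j.succ * pd 0 v p)
      ring

lemma Zop_zero (z : idx) : Zop z (fun _ => (0:ℝ)) p = 0 := by
  cases z with
  | inl α => exact pd_const 0 α
  | inr j =>
      show Lb _ _ _ = _
      unfold Lb
      rw [pd_const, pd_const]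
      ring

lemma diff_listSum {ι : Type*} (L : List ι) (F : ι → fn)
    (h : ∀ t ∈ L, DifferentiableAt ℝ (F t) p) :
    DifferentiableAt ℝ (fun q => (L.map (fun t => F t q)).sum) p := by
  induction L with
  | nil => simpa using differentiableAt_const (0:ℝ)
  | cons a L ih =>
      simp only [List.map_cons, List.sum_cons]
      exact (h a (by simp)).add (ih (fun t ht => h t (by simp [ht])))

lemma Zop_listSum {ι : Type*} (z : idx) (L : List ι) (F : ι → fn)
    (h : ∀ t ∈ L, DifferentiableAt ℝ (F t) p) :
    Zop z (fun q => (L.map (fun t => F t q)).sum) p = (L.map (fun t => Zop z (F t) p)).sum := by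
  induction L with
  | nil => simpa using Zop_zero z
  | cons a L ih =>
      simp only [List.map_cons, List.sum_cons]
      rw [← ih (fun t ht => h t (by simp [ht]))]
      exact Zop_add z (h a (by simp)) (diff_listSum L F (fun t ht => h t (by simp [ht])))

section comm
variable {w : fn} {p : Fin 4 → ℝ}

lemma pd_Lb (hV : IsOpen V) (hw : ContDiffOn ℝ (⊤:ℕ∞) w V) (hp : p ∈ V) (α : Fin 4) (j : Fin 3) :
    pd α (Lb j w) p = Lb j (pd α w) p + (if (0:Fin 4) = α then 1 else 0) * pd j.succ w p
      + (if j.succ = α then 1 else 0) * pd 0 w p := by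
  have h1 := diffAt hV (contDiffOn_pd hV hw j.succ) hp
  have h0 := diffAt hV (contDiffOn_pd hV hw 0) hp
  have cAt : ContDiffAt ℝ (⊤:ℕ∞) w p := hw.contDiffAt (hV.mem_nhds hp)
  have e : Lb j w = fun q => (fun q : Fin 4 → ℝ => q 0) q * pd j.succ w q
      + (fun q : Fin 4 → ℝ => q j.succ) q * pd 0 w q := rfl
  rw [e, pd_add ((diff_proj 0).fun_mul h1) ((diff_proj j.succ).fun_mul h0),
    pd_mul (diff_proj 0) h1, pd_mul (diff_proj j.succ) h0, pd_proj, pd_proj,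
    pd_pd cAt α j.succ, pd_pd cAt α 0]
  show _ = (p 0 * pd j.succ (pd α w) p + p j.succ * pd 0 (pd α w) p) + _ + _
  ring

lemma pd_db (hV : IsOpen V) (hw : ContDiffOn ℝ (⊤:ℕ∞) w V) (hp : p ∈ V) (α : Fin 4) (b : Fin 3) (hp0 : p 0 ≠ 0) :
    pd α (db b w) p = db b (pd α w) p + pd α (ff b) p * pd 0 w p := by
  have h1 := diffAt hV (contDiffOn_pd hV hw b.succ) hp
  have h0 := diffAt hV (contDiffOn_pd hV hw 0) hp
  have cAt : ContDiffAt ℝ (⊤:ℕ∞) w p := hw.contDiffAt (hV.mem_nhds hp)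
  rw [db_eq_ff, pd_add h1 ((diff_ff b hp0).fun_mul h0), pd_mul (diff_ff b hp0) h0,
    pd_pd cAt α b.succ, pd_pd cAt α 0, db_eq_ff]
  ring

lemma Lb_db (hV : IsOpen V) (hw : ContDiffOn ℝ (⊤:ℕ∞) w V) (hp : p ∈ V) (j b : Fin 3) (hp0 : p 0 ≠ 0) :
    Lb j (db b w) p = db b (Lb j w) p - ff b p * db j w p := by
  have cAt : ContDiffAt ℝ (⊤:ℕ∞) w p := hw.contDiffAt (hV.mem_nhds hp)
  have hC1 : pd j.succ (pd b.succ w) p = pd b.succ (pd j.succ w) p := pd_pd cAt j.succ b.succ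
  have hC2 : pd 0 (pd b.succ w) p = pd b.succ (pd 0 w) p := pd_pd cAt 0 b.succ
  have hC3 : pd 0 (pd j.succ w) p = pd j.succ (pd 0 w) p := pd_pd cAt 0 j.succ
  have eL : Lb j (db b w) p = p 0 * pd j.succ (db b w) p + p j.succ * pd 0 (db b w) p := rfl
  have eR : db b (Lb j w) p = pd b.succ (Lb j w) p + ff b p * pd 0 (Lb j w) p := by
    rw [db_eq_ff]
  have e1 : ∀ γ : Fin 4, db b (pd γ w) p = pd b.succ (pd γ w) p + ff b p * pd 0 (pd γ w) p :=
    fun γ => by rw [db_eq_ff]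
  have e2 : ∀ γ : Fin 4, Lb j (pd γ w) p
      = p 0 * pd j.succ (pd γ w) p + p j.succ * pd 0 (pd γ w) p := fun γ => rfl
  have e3 : db j w p = pd j.succ w p + ff j p * pd 0 w p := by rw [db_eq_ff]
  rw [eL, pd_db hV hw hp j.succ b hp0, pd_db hV hw hp 0 b hp0, eR,
    pd_Lb hV hw hp b.succ j, pd_Lb hV hw hp 0 j, e1, e1, e2, e2, e3,
    pd_ff hp0, pd_ff hp0, hC1, hC2, hC3]
  simp only [(Fin.succ_ne_zero b).symm, (Fin.succ_ne_zero j).symm, Fin.succ_inj, if_false,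
    if_true, Fin.succ_ne_zero, eq_self_iff_true]
  by_cases hbj : b = j
  · subst hbj
    simp only [if_true, eq_self_iff_true]
    unfold ff gg
    field_simp
    ring
  · have h2 : ¬ (j = b) := fun h => absurd h.symm hbj
    simp [hbj, h2]
    unfold ff gg
    field_simp
    ring

lemma pd_gdt (hV : IsOpen V) (hw : ContDiffOn ℝ (⊤:ℕ∞) w V) (hp : p ∈ V) (α : Fin 4) (hp0 : p 0 ≠ 0) :
    pd α (gdt w) p = gdt (pd α w) p
      - (if (0:Fin 4) = α then 1 else 0) * (gg p * gdt w p) := by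
  have h0 := diffAt hV (contDiffOn_pd hV hw 0) hp
  have cAt : ContDiffAt ℝ (⊤:ℕ∞) w p := hw.contDiffAt (hV.mem_nhds hp)
  show pd α (fun q => gg q * pd 0 w q) p = _
  rw [pd_mul (diff_gg hp0) h0, pd_pd cAt α 0, pd_gg hp0]
  unfold gdt
  ring

lemma Lb_gdt (hV : IsOpen V) (hw : ContDiffOn ℝ (⊤:ℕ∞) w V) (hp : p ∈ V) (j : Fin 3) (hp0 : p 0 ≠ 0) :
    Lb j (gdt w) p = gdt (Lb j w) p - gg p * db j w p := by
  have cAt : ContDiffAt ℝ (⊤:ℕ∞) w p := hw.contDiffAt (hV.mem_nhds hp)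
  have hC3 : pd 0 (pd j.succ w) p = pd j.succ (pd 0 w) p := pd_pd cAt 0 j.succ
  have eL : Lb j (gdt w) p = p 0 * pd j.succ (gdt w) p + p j.succ * pd 0 (gdt w) p := rfl
  have eR : gdt (Lb j w) p = gg p * pd 0 (Lb j w) p := rfl
  have e3 : db j w p = pd j.succ w p + ff j p * pd 0 w p := by rw [db_eq_ff]
  rw [eL, pd_gdt hV hw hp j.succ hp0, pd_gdt hV hw hp 0 hp0, eR,
    pd_Lb hV hw hp 0 j, e3]
  have e2 : Lb j (pd 0 w) p = p 0 * pd j.succ (pd 0 w) p + p j.succ * pd 0 (pd 0 w) p := rfl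
  have e4 : ∀ γ : Fin 4, gdt (pd γ w) p = gg p * pd 0 (pd γ w) p := fun _ => rfl
  rw [e2, e4, e4, hC3]
  simp only [(Fin.succ_ne_zero j).symm, Fin.succ_ne_zero, if_false, if_true, eq_self_iff_true]
  unfold gdt ff gg
  field_simp
  ring

end comm

/-- The region where coefficients are bounded. -/
def Reg : Set (Fin 4 → ℝ) := {p | 1 ≤ p 0 ∧ (∑ b : Fin 3, p b.succ ^ 2) ≤ p 0 ^ 2}

lemma Reg_subset_Tpos : Reg ⊆ Tpos := fun p hp => lt_of_lt_of_le one_pos hp.1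

lemma Reg_abs_le {p : Fin 4 → ℝ} (hp : p ∈ Reg) (b : Fin 3) : |p b.succ| ≤ p 0 := by
  have h1 : p b.succ ^ 2 ≤ p 0 ^ 2 := by
    refine le_trans ?_ hp.2
    exact Finset.single_le_sum (fun i _ => sq_nonneg (p i.succ)) (Finset.mem_univ b)
  calc |p b.succ| = Real.sqrt (p b.succ ^ 2) := (Real.sqrt_sq_eq_abs _).symm
    _ ≤ Real.sqrt (p 0 ^ 2) := Real.sqrt_le_sqrt h1
    _ = |p 0| := Real.sqrt_sq_eq_abs _
    _ = p 0 := abs_of_pos (Reg_subset_Tpos hp)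

lemma Reg_gg_le {p : Fin 4 → ℝ} (hp : p ∈ Reg) : |gg p| ≤ 1 := by
  have h0 : (1:ℝ) ≤ p 0 := hp.1
  rw [gg, abs_inv, abs_of_pos (Reg_subset_Tpos hp)]
  rw [inv_le_one_iff₀]
  right; exact h0

lemma Reg_ff_le {p : Fin 4 → ℝ} (hp : p ∈ Reg) (b : Fin 3) : |ff b p| ≤ 1 := by
  have h0 : (0:ℝ) < p 0 := Reg_subset_Tpos hp
  rw [ff, abs_mul, gg, abs_inv, abs_of_pos h0]
  rw [mul_inv_le_iff₀ h0, one_mul]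
  exact Reg_abs_le hp b

/-- The algebra of admissible coefficient functions. -/
inductive CoefA : fn → Prop
  | const (r : ℝ) : CoefA (fun _ => r)
  | ffc (b : Fin 3) : CoefA (ff b)
  | ggc : CoefA gg
  | add {c d : fn} : CoefA c → CoefA d → CoefA (fun q => c q + d q)
  | mul {c d : fn} : CoefA c → CoefA d → CoefA (fun q => c q * d q)

lemma CoefA.smooth {c : fn} (h : CoefA c) : ContDiffOn ℝ (⊤:ℕ∞) c Tpos := by
  induction h with
  | const r => exact contDiffOn_const
  | ffc b => exact contDiffOn_ff b
  | ggc => exact contDiffOn_gg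
  | add _ _ ih ih' => exact ih.add ih'
  | mul _ _ ih ih' => exact ih.mul ih'

lemma CoefA.bound {c : fn} (h : CoefA c) : ∃ M : ℝ, 0 ≤ M ∧ ∀ p ∈ Reg, |c p| ≤ M := by
  induction h with
  | const r => exact ⟨|r|, abs_nonneg r, fun p _ => le_refl _⟩
  | ffc b => exact ⟨1, zero_le_one, fun p hp => Reg_ff_le hp b⟩
  | ggc => exact ⟨1, zero_le_one, fun p hp => Reg_gg_le hp⟩
  | add _ _ ih ih' =>
      obtain ⟨M, hM, hb⟩ := ih; obtain ⟨M', hM', hb'⟩ := ih'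
      exact ⟨M + M', by linarith, fun p hp =>
        (abs_add_le _ _).trans (add_le_add (hb p hp) (hb' p hp))⟩
  | mul _ _ ih ih' =>
      obtain ⟨M, hM, hb⟩ := ih; obtain ⟨M', hM', hb'⟩ := ih'
      exact ⟨M * M', mul_nonneg hM hM', fun p hp => by
        rw [abs_mul]
        exact mul_le_mul (hb p hp) (hb' p hp) (abs_nonneg _) hM⟩

lemma Zop_const {p : Fin 4 → ℝ} (z : idx) (r : ℝ) : Zop z (fun _ => r) p = 0 := by
  cases z with
  | inl α => exact pd_const r α
  | inr j =>
      show Lb _ _ _ = _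
      unfold Lb
      rw [pd_const, pd_const]
      ring

lemma Zop_const_mul {p : Fin 4 → ℝ} {F : fn} (z : idx) (r : ℝ)
    (hF : DifferentiableAt ℝ F p) : Zop z (fun q => r * F q) p = r * Zop z F p := by
  have h := Zop_mul (u := fun _ => r) (v := F) z (differentiableAt_const r) hF
  rw [h, Zop_const]
  ring

lemma CoefA.zop {c : fn} (h : CoefA c) (z : idx) :
    ∃ c', CoefA c' ∧ Set.EqOn (Zop z c) c' Tpos := by
  induction h with
  | const r => exact ⟨fun _ => 0, CoefA.const 0, fun p _ => Zop_const z r⟩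
  | ffc b =>
      cases z with
      | inl α =>
          refine ⟨fun q => (if b.succ = α then 1 else 0) * gg q
            + (-(if (0:Fin 4) = α then 1 else 0)) * (ff b q * gg q),
            CoefA.add (CoefA.mul (CoefA.const _) CoefA.ggc)
              (CoefA.mul (CoefA.const _) (CoefA.mul (CoefA.ffc b) CoefA.ggc)), ?_⟩
          intro p hp
          show pd α (ff b) p = _
          rw [pd_ff (ne_of_gt hp)]
          ring
      | inr j =>
          refine ⟨fun q => (if b = j then 1 else 0) + (-1) * (ff j q * ff b q),
            CoefA.add (CoefA.const _) (CoefA.mul (CoefA.const _)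
              (CoefA.mul (CoefA.ffc j) (CoefA.ffc b))), ?_⟩
          intro p hp
          show Lb j (ff b) p = _
          rw [Lb_ff (ne_of_gt hp)]
          ring
  | ggc =>
      cases z with
      | inl α =>
          refine ⟨fun q => (-(if (0:Fin 4) = α then 1 else 0)) * (gg q * gg q),
            CoefA.mul (CoefA.const _) (CoefA.mul CoefA.ggc CoefA.ggc), ?_⟩
          intro p hp
          show pd α gg p = _
          rw [pd_gg (ne_of_gt hp)]
          ring
      | inr j =>
          refine ⟨fun q => (-1) * (ff j q * gg q),
            CoefA.mul (CoefA.const _) (CoefA.mul (CoefA.ffc j) CoefA.ggc), ?_⟩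
          intro p hp
          show Lb j gg p = _
          rw [Lb_gg (ne_of_gt hp)]
          ring
  | @add c d hc hd ih ih' =>
      obtain ⟨c', hc', he⟩ := ih; obtain ⟨d', hd', he'⟩ := ih'
      refine ⟨fun q => c' q + d' q, CoefA.add hc' hd', fun p hp => ?_⟩
      show _ = c' p + d' p
      rw [← he hp, ← he' hp]
      exact Zop_add z (diffAt isOpen_Tpos hc.smooth hp) (diffAt isOpen_Tpos hd.smooth hp)
  | @mul c d hc hd ih ih' =>
      obtain ⟨c', hc', he⟩ := ih; obtain ⟨d', hd', he'⟩ := ih'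
      refine ⟨fun q => c' q * d q + c q * d' q,
        CoefA.add (CoefA.mul hc' hd) (CoefA.mul hc hd'), fun p hp => ?_⟩
      show _ = c' p * d p + c p * d' p
      rw [← he hp, ← he' hp]
      exact Zop_mul z (diffAt isOpen_Tpos hc.smooth hp) (diffAt isOpen_Tpos hd.smooth hp)

/-- correction terms when commuting one field past `∂_β`. -/
def corrB (z : idx) (β : Fin 4) (K : List idx) : List (ℝ × Fin 4 × List idx) :=
  match z with
  | Sum.inl _ => []
  | Sum.inr j => [(-(if (0:Fin 4) = β then 1 else 0), j.succ, K),
                  (-(if j.succ = β then 1 else 0), (0:Fin 4), K)]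

lemma corrB_len {z : idx} {β : Fin 4} {K : List idx} :
    ∀ t ∈ corrB z β K, t.2.2.length = K.length := by
  cases z with
  | inl γ => intro t ht; simp [corrB] at ht
  | inr j =>
      intro t ht
      simp [corrB] at ht
      rcases ht with h | h <;> rw [h]

lemma Zop_pd_comm {V : Set (Fin 4 → ℝ)} (hV : IsOpen V) {u : fn}
    (hu : ContDiffOn ℝ (⊤:ℕ∞) u V) {p : Fin 4 → ℝ} (hp : p ∈ V) (z : idx) (β : Fin 4)
    (K : List idx) :
    Zop z (pd β (ZI K u)) p = pd β (ZI (z :: K) u) p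
      + ((corrB z β K).map (fun t => t.1 * pd t.2.1 (ZI t.2.2 u) p)).sum := by
  have hw : ContDiffOn ℝ (⊤:ℕ∞) (ZI K u) V := contDiffOn_ZI hV hu K
  cases z with
  | inl γ =>
      show pd γ (pd β (ZI K u)) p = pd β (pd γ (ZI K u)) p + _
      rw [pd_pd (hw.contDiffAt (hV.mem_nhds hp)) γ β]
      simp [corrB]
  | inr j =>
      show Lb j (pd β (ZI K u)) p = pd β (Lb j (ZI K u)) p + _
      have h := pd_Lb hV hw hp β j
      simp only [corrB, List.map_cons, List.map_nil, List.sum_cons, List.sum_nil]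
      rw [h]
      ring

lemma sum_map_bind {ι κ : Type*} (L : List ι) (f : ι → List κ) (g : κ → ℝ) :
    (((L.flatMap f).map g).sum) = (L.map (fun t => ((f t).map g).sum)).sum := by
  induction L with
  | nil => simp
  | cons a L ih => simp [List.map_append, List.sum_append, ih]

lemma sum_map_add {ι : Type*} (L : List ι) (f g : ι → ℝ) :
    (L.map (fun t => f t + g t)).sum = (L.map f).sum + (L.map g).sum := by
  induction L with
  | nil => simp
  | cons b L ih => simp [ih]; ring

lemma sum_map_mul_left {ι : Type*} (L : List ι) (a : ℝ) (f : ι → ℝ) :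
    (L.map (fun t => a * f t)).sum = a * (L.map f).sum := by
  induction L with
  | nil => simp
  | cons b L ih => simp [ih]; ring

lemma repB (J : List idx) (α : Fin 4) :
    ∃ L : List (ℝ × Fin 4 × List idx),
      (∀ t ∈ L, t.2.2.length < J.length) ∧
      ∀ (V : Set (Fin 4 → ℝ)), IsOpen V → ∀ u : fn, ContDiffOn ℝ (⊤:ℕ∞) u V →
        ∀ p ∈ V, ZI J (pd α u) p
          = pd α (ZI J u) p + (L.map (fun t => t.1 * pd t.2.1 (ZI t.2.2 u) p)).sum := by
  induction J with
  | nil =>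
      refine ⟨[], by simp, ?_⟩
      intro V hV u hu p hp
      simp [ZI]
  | cons z J ih =>
      obtain ⟨L, hL, hrep⟩ := ih
      refine ⟨corrB z α J ++ (L.map fun t => (t.1, t.2.1, z :: t.2.2))
        ++ (L.flatMap fun t => (corrB z t.2.1 t.2.2).map (fun s => (t.1 * s.1, s.2))), ?_, ?_⟩
      · intro t ht
        simp only [List.mem_append, List.mem_map, List.mem_flatMap] at ht
        rcases ht with (h | ⟨s, hs, rfl⟩) | ⟨s, hs, hmem⟩
        · rw [corrB_len t h]
          simp only [List.length_cons]
          exact Nat.lt_succ_self _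
        · simp only [List.length_cons]
          exact Nat.succ_lt_succ (hL s hs)
        · obtain ⟨s', hs', rfl⟩ := hmem
          have := corrB_len _ hs'
          simp only [List.length_cons]
          calc _ = s.2.2.length := this
            _ < J.length := hL s hs
            _ < J.length + 1 := Nat.lt_succ_self _
      · intro V hV u hu p hp
        have hw : ContDiffOn ℝ (⊤:ℕ∞) (ZI J u) V := contDiffOn_ZI hV hu J
        have hdterm : ∀ t : ℝ × Fin 4 × List idx,
            DifferentiableAt ℝ (fun q => t.1 * pd t.2.1 (ZI t.2.2 u) q) p :=
          fun t => (diffAt hV (contDiffOn_pd hV (contDiffOn_ZI hV hu t.2.2) t.2.1) hp).const_mul t.1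
        have hEq : Set.EqOn (ZI J (pd α u))
            (fun q => pd α (ZI J u) q + ((L.map (fun t => t.1 * pd t.2.1 (ZI t.2.2 u) q))).sum)
            V := fun q hq => hrep V hV u hu q hq
        have step1 : ZI (z :: J) (pd α u) p
            = Zop z (fun q => pd α (ZI J u) q
              + ((L.map (fun t => t.1 * pd t.2.1 (ZI t.2.2 u) q))).sum) p :=
          Zop_congr hV hEq z hp
        rw [step1, Zop_add z (diffAt hV (contDiffOn_pd hV hw α) hp)
          (diff_listSum L _ (fun t _ => hdterm t)),
          Zop_listSum z L _ (fun t _ => hdterm t)]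
        have e1 : Zop z (pd α (ZI J u)) p = pd α (ZI (z :: J) u) p
            + ((corrB z α J).map (fun t => t.1 * pd t.2.1 (ZI t.2.2 u) p)).sum :=
          Zop_pd_comm hV hu hp z α J
        have e2 : (L.map (fun t => Zop z (fun q => t.1 * pd t.2.1 (ZI t.2.2 u) q) p)).sum
            = (L.map (fun t => t.1 * pd t.2.1 (ZI (z :: t.2.2) u) p
                + t.1 * ((corrB z t.2.1 t.2.2).map
                    (fun s => s.1 * pd s.2.1 (ZI s.2.2 u) p)).sum)).sum := by
          congr 1
          apply List.map_congr_left
          intro t _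
          rw [Zop_const_mul z t.1 (diffAt hV (contDiffOn_pd hV (contDiffOn_ZI hV hu t.2.2) t.2.1) hp),
            Zop_pd_comm hV hu hp z t.2.1 t.2.2]
          ring
        rw [e1, e2]
        simp only [List.map_append, List.sum_append, List.map_map]
        rw [sum_map_bind]
        have e3 : (L.map (fun t => ((((corrB z t.2.1 t.2.2).map (fun s => (t.1 * s.1, s.2))).map
            (fun t => t.1 * pd t.2.1 (ZI t.2.2 u) p)).sum))).sum
            = (L.map (fun t => t.1 * ((corrB z t.2.1 t.2.2).map
                (fun s => s.1 * pd s.2.1 (ZI s.2.2 u) p)).sum)).sum := by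
          congr 1
          apply List.map_congr_left
          intro t _
          rw [List.map_map, ← sum_map_mul_left]
          congr 1
          apply List.map_congr_left
          intro s _
          show t.1 * s.1 * pd s.2.1 (ZI s.2.2 u) p = _
          ring
        rw [e3, sum_map_add]
        show _ = _ + (_ + (L.map ((fun t => t.1 * pd t.2.1 (ZI t.2.2 u) p)
            ∘ (fun t => (t.1, t.2.1, z :: t.2.2)))).sum + _)
        have e4 : (L.map ((fun t : ℝ × Fin 4 × List idx => t.1 * pd t.2.1 (ZI t.2.2 u) p)
            ∘ (fun t : ℝ × Fin 4 × List idx => (t.1, t.2.1, z :: t.2.2))))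
            = L.map (fun t => t.1 * pd t.2.1 (ZI (z :: t.2.2) u) p) := by
          apply List.map_congr_left
          intro t _
          rfl
        rw [e4]
        ring

/-- Atoms for part (a): tangential derivatives and `g∂_t` residuals. -/
abbrev ATm := (Fin 3 × List idx) ⊕ (List idx)

def atomv (u : fn) : ATm → fn
  | Sum.inl (b, K) => db b (ZI K u)
  | Sum.inr K => gdt (ZI K u)

def lenOK (n : ℕ) : ATm → Prop
  | Sum.inl (_, K) => K.length ≤ n
  | Sum.inr K => K.length < n

lemma contDiffOn_atomv {V : Set (Fin 4 → ℝ)} (hV : IsOpen V) (hVT : V ⊆ Tpos) {u : fn}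
    (hu : ContDiffOn ℝ (⊤:ℕ∞) u V) : ∀ a : ATm, ContDiffOn ℝ (⊤:ℕ∞) (atomv u a) V := by
  rintro (⟨b, K⟩ | K)
  · exact contDiffOn_db hV hVT (contDiffOn_ZI hV hu K) b
  · exact contDiffOn_gdt hV hVT (contDiffOn_ZI hV hu K)

/-- a choice function for the `Z`-derivative of a coefficient. -/
def zc (z : idx) (c : fn) : fn :=
  letI := Classical.dec (CoefA c)
  if h : CoefA c then Classical.choose (h.zop z) else fun _ => 0

lemma zc_spec {c : fn} (h : CoefA c) (z : idx) :
    CoefA (zc z c) ∧ Set.EqOn (Zop z c) (zc z c) Tpos := by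
  unfold zc
  letI := Classical.dec (CoefA c)
  rw [dif_pos h]
  exact Classical.choose_spec (h.zop z)

def stepA (z : idx) (t : fn × ATm) : List (fn × ATm) :=
  (zc z t.1, t.2) ::
  (match z, t.2 with
   | Sum.inl α, Sum.inl (b, K) =>
       [(t.1, Sum.inl (b, Sum.inl α :: K)),
        ((fun q => t.1 q * ((if b.succ = α then 1 else 0)
            + (-(if (0:Fin 4) = α then 1 else 0)) * ff b q)), Sum.inr K)]
   | Sum.inr j, Sum.inl (b, K) =>
       [(t.1, Sum.inl (b, Sum.inr j :: K)),
        ((fun q => (-1) * (t.1 q * ff b q)), Sum.inl (j, K))]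
   | Sum.inl α, Sum.inr K =>
       [(t.1, Sum.inr (Sum.inl α :: K)),
        ((fun q => (-(if (0:Fin 4) = α then 1 else 0)) * (t.1 q * gg q)), Sum.inr K)]
   | Sum.inr j, Sum.inr K =>
       [(t.1, Sum.inr (Sum.inr j :: K)),
        ((fun q => (-1) * (t.1 q * gg q)), Sum.inl (j, K))])

lemma stepA_wf {n : ℕ} {t : fn × ATm} (hc : CoefA t.1) (hl : lenOK n t.2) (z : idx) :
    ∀ s ∈ stepA z t, CoefA s.1 ∧ lenOK (n + 1) s.2 := by
  intro s hs
  obtain ⟨c, a⟩ := t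
  have hzc := (zc_spec hc z).1
  rcases z with α | j <;> rcases a with ⟨b, K⟩ | K <;>
    simp only [stepA, List.mem_cons, List.mem_singleton, List.not_mem_nil, or_false] at hs <;>
    rcases hs with rfl | rfl | rfl
  · exact ⟨hzc, by simp only [lenOK] at hl ⊢; omega⟩
  · exact ⟨hc, by simp only [lenOK, List.length_cons] at hl ⊢; omega⟩
  · refine ⟨CoefA.mul hc (CoefA.add (CoefA.const _) (CoefA.mul (CoefA.const _) (CoefA.ffc b))), ?_⟩
    simp only [lenOK] at hl ⊢; omega
  · exact ⟨hzc, by simp only [lenOK] at hl ⊢; omega⟩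
  · exact ⟨hc, by simp only [lenOK, List.length_cons] at hl ⊢; omega⟩
  · exact ⟨CoefA.mul (CoefA.const _) (CoefA.mul hc CoefA.ggc),
      by simp only [lenOK] at hl ⊢; omega⟩
  · exact ⟨hzc, by simp only [lenOK] at hl ⊢; omega⟩
  · exact ⟨hc, by simp only [lenOK, List.length_cons] at hl ⊢; omega⟩
  · refine ⟨CoefA.mul (CoefA.const _) (CoefA.mul hc (CoefA.ffc b)), ?_⟩
    simp only [lenOK] at hl ⊢; omega
  · exact ⟨hzc, by simp only [lenOK] at hl ⊢; omega⟩
  · exact ⟨hc, by simp only [lenOK, List.length_cons] at hl ⊢; omega⟩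
  · exact ⟨CoefA.mul (CoefA.const _) (CoefA.mul hc CoefA.ggc),
      by simp only [lenOK] at hl ⊢; omega⟩

lemma stepA_eval {V : Set (Fin 4 → ℝ)} (hV : IsOpen V) (hVT : V ⊆ Tpos) {u : fn}
    (hu : ContDiffOn ℝ (⊤:ℕ∞) u V) {p : Fin 4 → ℝ} (hp : p ∈ V) {t : fn × ATm}
    (hc : CoefA t.1) (z : idx) :
    Zop z (fun q => t.1 q * atomv u t.2 q) p
      = ((stepA z t).map (fun s => s.1 p * atomv u s.2 p)).sum := by
  have hp0 : p 0 ≠ 0 := ne_of_gt (hVT hp)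
  have hdc : DifferentiableAt ℝ t.1 p := diffAt isOpen_Tpos hc.smooth (hVT hp)
  have hda : DifferentiableAt ℝ (atomv u t.2) p := diffAt hV (contDiffOn_atomv hV hVT hu t.2) hp
  rw [Zop_mul z hdc hda, (zc_spec hc z).2 (hVT hp)]
  obtain ⟨c, a⟩ := t
  rcases z with α | j <;> rcases a with ⟨b, K⟩ | K <;>
    have hw : ContDiffOn ℝ (⊤:ℕ∞) (ZI K u) V := contDiffOn_ZI hV hu K
  · -- ∂_α on db-atom
    show zc (Sum.inl α) c p * db b (ZI K u) p + c p * pd α (db b (ZI K u)) p = _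
    rw [pd_db hV hw hp α b hp0, pd_ff hp0]
    simp only [stepA, atomv, List.map_cons, List.map_nil, List.sum_cons, List.sum_nil, add_zero]
    show _ = zc (Sum.inl α) c p * db b (ZI K u) p
      + (c p * db b (pd α (ZI K u)) p
        + (c p * ((if b.succ = α then 1 else 0)
            + (-(if (0:Fin 4) = α then 1 else 0)) * ff b p)) * gdt (ZI K u) p)
    unfold gdt
    ring
  · -- ∂_α on gdt-atom
    show zc (Sum.inl α) c p * gdt (ZI K u) p + c p * pd α (gdt (ZI K u)) p = _
    rw [pd_gdt hV hw hp α hp0]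
    simp only [stepA, atomv, List.map_cons, List.map_nil, List.sum_cons, List.sum_nil, add_zero]
    show _ = zc (Sum.inl α) c p * gdt (ZI K u) p
      + (c p * gdt (pd α (ZI K u)) p
        + ((-(if (0:Fin 4) = α then 1 else 0)) * (c p * gg p)) * gdt (ZI K u) p)
    ring
  · -- H_j on db-atom
    show zc (Sum.inr j) c p * db b (ZI K u) p + c p * Lb j (db b (ZI K u)) p = _
    rw [Lb_db hV hw hp j b hp0]
    simp only [stepA, atomv, List.map_cons, List.map_nil, List.sum_cons, List.sum_nil, add_zero]
    show _ = zc (Sum.inr j) c p * db b (ZI K u) p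
      + (c p * db b (Lb j (ZI K u)) p
        + ((-1) * (c p * ff b p)) * db j (ZI K u) p)
    ring
  · -- H_j on gdt-atom
    show zc (Sum.inr j) c p * gdt (ZI K u) p + c p * Lb j (gdt (ZI K u)) p = _
    rw [Lb_gdt hV hw hp j hp0]
    simp only [stepA, atomv, List.map_cons, List.map_nil, List.sum_cons, List.sum_nil, add_zero]
    show _ = zc (Sum.inr j) c p * gdt (ZI K u) p
      + (c p * gdt (Lb j (ZI K u)) p
        + ((-1) * (c p * gg p)) * db j (ZI K u) p)
    ring

lemma repA (J : List idx) (i : Fin 3) :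
    ∃ L : List (fn × ATm),
      (∀ t ∈ L, CoefA t.1 ∧ lenOK J.length t.2) ∧
      ∀ (V : Set (Fin 4 → ℝ)), IsOpen V → V ⊆ Tpos → ∀ u : fn, ContDiffOn ℝ (⊤:ℕ∞) u V →
        ∀ p ∈ V, ZI J (db i u) p = (L.map (fun t => t.1 p * atomv u t.2 p)).sum := by
  induction J with
  | nil =>
      refine ⟨[(fun _ => 1, Sum.inl (i, []))], ?_, ?_⟩
      · intro t ht
        simp only [List.mem_singleton] at ht
        subst ht
        exact ⟨CoefA.const 1, by simp [lenOK]⟩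
      · intro V hV hVT u hu p hp
        simp [ZI, atomv]
  | cons z J ih =>
      obtain ⟨L, hWF, hrep⟩ := ih
      refine ⟨L.flatMap (stepA z), ?_, ?_⟩
      · intro s hs
        rw [List.mem_flatMap] at hs
        obtain ⟨t, ht, hst⟩ := hs
        have := stepA_wf (hWF t ht).1 (hWF t ht).2 z s hst
        simpa using this
      · intro V hV hVT u hu p hp
        have hEq : Set.EqOn (ZI J (db i u))
            (fun q => (L.map (fun t => t.1 q * atomv u t.2 q)).sum) V :=
          fun q hq => hrep V hV hVT u hu q hq
        have hdterm : ∀ t ∈ L, DifferentiableAt ℝ (fun q => t.1 q * atomv u t.2 q) p :=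
          fun t ht => (diffAt isOpen_Tpos (hWF t ht).1.smooth (hVT hp)).mul
            (diffAt hV (contDiffOn_atomv hV hVT hu t.2) hp)
        have step1 : ZI (z :: J) (db i u) p
            = Zop z (fun q => (L.map (fun t => t.1 q * atomv u t.2 q)).sum) p :=
          Zop_congr hV hEq z hp
        rw [step1, Zop_listSum z L _ hdterm, sum_map_bind]
        congr 1
        apply List.map_congr_left
        intro t ht
        exact stepA_eval hV hVT hu hp (hWF t ht).1 z

lemma gLb {p : Fin 4 → ℝ} (hp0 : p 0 ≠ 0) (b : Fin 3) (v : fn) :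
    gg p * Lb b v p = db b v p := by
  show gg p * (p 0 * pd b.succ v p + p b.succ * pd 0 v p)
    = pd b.succ v p + (p b.succ / p 0) * pd 0 v p
  unfold gg
  field_simp

lemma gdt_identity {V : Set (Fin 4 → ℝ)} (hV : IsOpen V) (hVT : V ⊆ Tpos) {w : fn}
    (hw : ContDiffOn ℝ (⊤:ℕ∞) w V) {p : Fin 4 → ℝ} (hp : p ∈ V) :
    (3 - ∑ b : Fin 3, ff b p ^ 2) * gdt w p
      = ∑ b : Fin 3, (gg p * db b (Lb b w) p - gg p * ff b p * db b w p
          - db b (pd b.succ w) p - ff b p * db b (pd 0 w) p) := by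
  have hp0 : p 0 ≠ 0 := ne_of_gt (hVT hp)
  have hb : ∀ b : Fin 3, gg p * db b (Lb b w) p - gg p * ff b p * db b w p
      - db b (pd b.succ w) p - ff b p * db b (pd 0 w) p = (1 - ff b p ^ 2) * gdt w p := by
    intro b
    have h1 : Lb b (db b w) p = db b (Lb b w) p - ff b p * db b w p := Lb_db hV hw hp b b hp0
    have h2 : gg p * Lb b (db b w) p = db b (db b w) p := gLb hp0 b (db b w)
    have h3 : db b (db b w) p = pd b.succ (db b w) p + ff b p * pd 0 (db b w) p := by
      rw [db_eq_ff b (db b w)]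
    have h4 : pd b.succ (db b w) p = db b (pd b.succ w) p + pd b.succ (ff b) p * pd 0 w p :=
      pd_db hV hw hp b.succ b hp0
    have h5 : pd 0 (db b w) p = db b (pd 0 w) p + pd 0 (ff b) p * pd 0 w p :=
      pd_db hV hw hp 0 b hp0
    have h6 : pd b.succ (ff b) p = gg p := by
      rw [pd_ff hp0]
      simp [Fin.succ_ne_zero, (Fin.succ_ne_zero b).symm]
    have h7 : pd 0 (ff b) p = -(ff b p * gg p) := by
      rw [pd_ff hp0]
      simp [(Fin.succ_ne_zero b)]
    have e1 : gg p * db b (Lb b w) p - gg p * ff b p * db b w p = db b (db b w) p := by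
      rw [← h2, h1]
      ring
    rw [e1, h3, h4, h5, h6, h7]
    unfold gdt
    ring
  rw [Finset.sum_congr rfl (fun b _ => hb b), ← Finset.sum_mul]
  congr 1
  rw [Finset.sum_sub_distrib]
  simp

lemma Reg_sumff {p : Fin 4 → ℝ} (hp : p ∈ Reg) : ∑ b : Fin 3, ff b p ^ 2 ≤ 1 := by
  have hp0 : (0:ℝ) < p 0 := Reg_subset_Tpos hp
  have e : ∑ b : Fin 3, ff b p ^ 2 = (∑ b : Fin 3, p b.succ ^ 2) * gg p ^ 2 := by
    rw [Finset.sum_mul]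
    refine Finset.sum_congr rfl (fun b _ => ?_)
    unfold ff
    ring
  rw [e]
  calc (∑ b : Fin 3, p b.succ ^ 2) * gg p ^ 2 ≤ p 0 ^ 2 * gg p ^ 2 :=
        mul_le_mul_of_nonneg_right hp.2 (sq_nonneg _)
    _ = (p 0 * gg p) ^ 2 := by ring
    _ = 1 := by rw [gg, mul_inv_cancel₀ (ne_of_gt hp0)]; norm_num

lemma abs_sub_le' (x y : ℝ) : |x - y| ≤ |x| + |y| := by
  rw [sub_eq_add_neg]
  exact (abs_add_le _ _).trans (by rw [abs_neg])

lemma gdt_bound {V : Set (Fin 4 → ℝ)} (hV : IsOpen V) (hVT : V ⊆ Tpos) {u : fn}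
    (hu : ContDiffOn ℝ (⊤:ℕ∞) u V) {p : Fin 4 → ℝ} (hp : p ∈ V) (hreg : p ∈ Reg)
    (K : List idx) :
    |gdt (ZI K u) p| ≤ ∑ b : Fin 3, (|db b (ZI (Sum.inr b :: K) u) p| + |db b (ZI K u) p|
      + |db b (ZI (Sum.inl b.succ :: K) u) p| + |db b (ZI (Sum.inl (0:Fin 4) :: K) u) p|) := by
  have hw : ContDiffOn ℝ (⊤:ℕ∞) (ZI K u) V := contDiffOn_ZI hV hu K
  have hid := gdt_identity hV hVT hw hp
  have hF := Reg_sumff hreg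
  have h2 : (2:ℝ) ≤ 3 - ∑ b : Fin 3, ff b p ^ 2 := by linarith
  set w := ZI K u with hwdef
  set B := ∑ b : Fin 3, (|db b (ZI (Sum.inr b :: K) u) p| + |db b (ZI K u) p|
      + |db b (ZI (Sum.inl b.succ :: K) u) p| + |db b (ZI (Sum.inl (0:Fin 4) :: K) u) p|) with hB
  have hsum : |(3 - ∑ b : Fin 3, ff b p ^ 2) * gdt w p| ≤ B := by
    rw [hid]
    refine (Finset.abs_sum_le_sum_abs _ _).trans ?_
    rw [hB]
    refine Finset.sum_le_sum (fun b _ => ?_)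
    have eb1 : Lb b w = ZI (Sum.inr b :: K) u := rfl
    have eb2 : pd b.succ w = ZI (Sum.inl b.succ :: K) u := rfl
    have eb3 : pd 0 w = ZI (Sum.inl (0:Fin 4) :: K) u := rfl
    have t1 : |gg p * db b (Lb b w) p| ≤ |db b (Lb b w) p| := by
      rw [abs_mul]
      calc |gg p| * |db b (Lb b w) p| ≤ 1 * |db b (Lb b w) p| :=
            mul_le_mul_of_nonneg_right (Reg_gg_le hreg) (abs_nonneg _)
        _ = _ := one_mul _
    have t2 : |gg p * ff b p * db b w p| ≤ |db b w p| := by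
      rw [abs_mul, abs_mul]
      have hgf : |gg p| * |ff b p| ≤ 1 :=
        mul_le_one₀ (Reg_gg_le hreg) (abs_nonneg _) (Reg_ff_le hreg b)
      calc |gg p| * |ff b p| * |db b w p| ≤ 1 * |db b w p| :=
            mul_le_mul_of_nonneg_right hgf (abs_nonneg _)
        _ = _ := one_mul _
    have t4 : |ff b p * db b (pd 0 w) p| ≤ |db b (pd 0 w) p| := by
      rw [abs_mul]
      calc |ff b p| * |db b (pd 0 w) p| ≤ 1 * |db b (pd 0 w) p| :=
            mul_le_mul_of_nonneg_right (Reg_ff_le hreg b) (abs_nonneg _)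
        _ = _ := one_mul _
    calc |gg p * db b (Lb b w) p - gg p * ff b p * db b w p
          - db b (pd b.succ w) p - ff b p * db b (pd 0 w) p|
        ≤ |gg p * db b (Lb b w) p - gg p * ff b p * db b w p - db b (pd b.succ w) p|
          + |ff b p * db b (pd 0 w) p| := abs_sub_le' _ _
      _ ≤ (|gg p * db b (Lb b w) p - gg p * ff b p * db b w p| + |db b (pd b.succ w) p|)
          + |ff b p * db b (pd 0 w) p| := by
            have := abs_sub_le' (gg p * db b (Lb b w) p - gg p * ff b p * db b w p)
              (db b (pd b.succ w) p)
            linarith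
      _ ≤ ((|gg p * db b (Lb b w) p| + |gg p * ff b p * db b w p|) + |db b (pd b.succ w) p|)
          + |ff b p * db b (pd 0 w) p| := by
            have := abs_sub_le' (gg p * db b (Lb b w) p) (gg p * ff b p * db b w p)
            linarith
      _ ≤ |db b (ZI (Sum.inr b :: K) u) p| + |db b (ZI K u) p|
          + |db b (ZI (Sum.inl b.succ :: K) u) p|
          + |db b (ZI (Sum.inl (0:Fin 4) :: K) u) p| := by
            rw [← eb1, ← eb2, ← eb3, ← hwdef]
            linarith
  have hBnn : 0 ≤ B := by
    rw [hB]
    refine Finset.sum_nonneg (fun b _ => ?_)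
    positivity
  have h3 : 2 * |gdt w p| ≤ B := by
    calc 2 * |gdt w p| ≤ (3 - ∑ b : Fin 3, ff b p ^ 2) * |gdt w p| :=
          mul_le_mul_of_nonneg_right h2 (abs_nonneg _)
      _ = |(3 - ∑ b : Fin 3, ff b p ^ 2) * gdt w p| := by
          rw [abs_mul, abs_of_nonneg (by linarith : (0:ℝ) ≤ 3 - ∑ b : Fin 3, ff b p ^ 2)]
      _ ≤ B := hsum
  linarith [abs_nonneg (gdt w p)]

lemma list_abs_sum {ι : Type*} (L : List ι) (f : ι → ℝ) :
    |(L.map f).sum| ≤ (L.map (fun t => |f t|)).sum := by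
  induction L with
  | nil => simp
  | cons a L ih =>
      simp only [List.map_cons, List.sum_cons]
      exact (abs_add_le _ _).trans (by linarith)

lemma list_sum_le {ι : Type*} (L : List ι) (f g : ι → ℝ) (h : ∀ t ∈ L, f t ≤ g t) :
    (L.map f).sum ≤ (L.map g).sum := by
  induction L with
  | nil => simp
  | cons a L ih =>
      simp only [List.map_cons, List.sum_cons]
      have := h a (by simp)
      have := ih (fun t ht => h t (by simp [ht]))
      linarith

lemma list_sum_nonneg {ι : Type*} (L : List ι) (f : ι → ℝ) (h : ∀ t ∈ L, 0 ≤ f t) :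
    0 ≤ (L.map f).sum := by
  induction L with
  | nil => simp
  | cons a L ih =>
      simp only [List.map_cons, List.sum_cons]
      have := h a (by simp)
      have := ih (fun t ht => h t (by simp [ht]))
      linarith

/-- choice function for coefficient bounds. -/
def Mc (c : fn) : ℝ :=
  letI := Classical.dec (CoefA c)
  if h : CoefA c then Classical.choose h.bound else 0

lemma Mc_spec {c : fn} (h : CoefA c) : 0 ≤ Mc c ∧ ∀ p ∈ Reg, |c p| ≤ Mc c := by
  unfold Mc
  letI := Classical.dec (CoefA c)
  rw [dif_pos h]
  exact Classical.choose_spec h.bound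

lemma Sa_nonneg (plen : ℕ) (u : fn) (p : Fin 4 → ℝ) :
    0 ≤ ∑ k ∈ Finset.range (plen+1), ∑ Kf : Fin k → idx,
        ∑ j : Fin 3, |db j (ZI (List.ofFn Kf) u) p| :=
  Finset.sum_nonneg fun _ _ => Finset.sum_nonneg fun _ _ =>
    Finset.sum_nonneg fun _ _ => abs_nonneg _

lemma le_Sa {plen : ℕ} (u : fn) (p : Fin 4 → ℝ) (K : List idx) (hK : K.length ≤ plen)
    (j : Fin 3) :
    |db j (ZI K u) p| ≤ ∑ k ∈ Finset.range (plen+1), ∑ Kf : Fin k → idx,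
        ∑ j' : Fin 3, |db j' (ZI (List.ofFn Kf) u) p| := by
  have h1 : |db j (ZI K u) p| ≤ ∑ j' : Fin 3, |db j' (ZI K u) p| :=
    Finset.single_le_sum (f := fun j' => |db j' (ZI K u) p|)
      (fun _ _ => abs_nonneg _) (Finset.mem_univ j)
  have h2 : (∑ j' : Fin 3, |db j' (ZI K u) p|)
      ≤ ∑ Kf : Fin K.length → idx, ∑ j' : Fin 3, |db j' (ZI (List.ofFn Kf) u) p| := by
    have e : (∑ j' : Fin 3, |db j' (ZI K u) p|)
        = ∑ j' : Fin 3, |db j' (ZI (List.ofFn K.get) u) p| := by rw [List.ofFn_get]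
    rw [e]
    exact Finset.single_le_sum
      (f := fun Kf : Fin K.length → idx => ∑ j' : Fin 3, |db j' (ZI (List.ofFn Kf) u) p|)
      (fun Kf _ => Finset.sum_nonneg fun _ _ => abs_nonneg _) (Finset.mem_univ K.get)
  have h3 : (∑ Kf : Fin K.length → idx, ∑ j' : Fin 3, |db j' (ZI (List.ofFn Kf) u) p|)
      ≤ ∑ k ∈ Finset.range (plen+1), ∑ Kf : Fin k → idx,
          ∑ j' : Fin 3, |db j' (ZI (List.ofFn Kf) u) p| :=
    Finset.single_le_sum
      (f := fun k => ∑ Kf : Fin k → idx, ∑ j' : Fin 3, |db j' (ZI (List.ofFn Kf) u) p|)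
      (fun k _ => Finset.sum_nonneg fun _ _ => Finset.sum_nonneg fun _ _ => abs_nonneg _)
      (Finset.mem_range.mpr (Nat.lt_succ_of_le hK))
  linarith

lemma Sb_nonneg (m : ℕ) (u : fn) (p : Fin 4 → ℝ) :
    0 ≤ ∑ k ∈ Finset.range m, ∑ Jf : Fin k → idx,
        ∑ β : Fin 4, |pd β (ZI (List.ofFn Jf) u) p| :=
  Finset.sum_nonneg fun _ _ => Finset.sum_nonneg fun _ _ =>
    Finset.sum_nonneg fun _ _ => abs_nonneg _

lemma le_Sb {m : ℕ} (u : fn) (p : Fin 4 → ℝ) (K : List idx) (hK : K.length < m)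
    (β : Fin 4) :
    |pd β (ZI K u) p| ≤ ∑ k ∈ Finset.range m, ∑ Jf : Fin k → idx,
        ∑ β' : Fin 4, |pd β' (ZI (List.ofFn Jf) u) p| := by
  have h1 : |pd β (ZI K u) p| ≤ ∑ β' : Fin 4, |pd β' (ZI K u) p| :=
    Finset.single_le_sum (f := fun β' => |pd β' (ZI K u) p|)
      (fun _ _ => abs_nonneg _) (Finset.mem_univ β)
  have h2 : (∑ β' : Fin 4, |pd β' (ZI K u) p|)
      ≤ ∑ Jf : Fin K.length → idx, ∑ β' : Fin 4, |pd β' (ZI (List.ofFn Jf) u) p| := by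
    have e : (∑ β' : Fin 4, |pd β' (ZI K u) p|)
        = ∑ β' : Fin 4, |pd β' (ZI (List.ofFn K.get) u) p| := by rw [List.ofFn_get]
    rw [e]
    exact Finset.single_le_sum
      (f := fun Jf : Fin K.length → idx => ∑ β' : Fin 4, |pd β' (ZI (List.ofFn Jf) u) p|)
      (fun Jf _ => Finset.sum_nonneg fun _ _ => abs_nonneg _) (Finset.mem_univ K.get)
  have h3 : (∑ Jf : Fin K.length → idx, ∑ β' : Fin 4, |pd β' (ZI (List.ofFn Jf) u) p|)
      ≤ ∑ k ∈ Finset.range m, ∑ Jf : Fin k → idx,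
          ∑ β' : Fin 4, |pd β' (ZI (List.ofFn Jf) u) p| :=
    Finset.single_le_sum
      (f := fun k => ∑ Jf : Fin k → idx, ∑ β' : Fin 4, |pd β' (ZI (List.ofFn Jf) u) p|)
      (fun k _ => Finset.sum_nonneg fun _ _ => Finset.sum_nonneg fun _ _ => abs_nonneg _)
      (Finset.mem_range.mpr hK)
  linarith

lemma instA (plen : ℕ) (J : List idx) (hJ : J.length ≤ plen) (i : Fin 3) :
    ∃ C : ℝ, 0 ≤ C ∧ ∀ (V : Set (Fin 4 → ℝ)), IsOpen V → V ⊆ Tpos →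
      ∀ u : fn, ContDiffOn ℝ (⊤:ℕ∞) u V → ∀ p ∈ V, p ∈ Reg →
        |ZI J (db i u) p| ≤ C * ∑ k ∈ Finset.range (plen+1), ∑ Kf : Fin k → idx,
          ∑ j : Fin 3, |db j (ZI (List.ofFn Kf) u) p| := by
  obtain ⟨L, hWF, hrep⟩ := repA J i
  refine ⟨12 * (L.map (fun t => Mc t.1)).sum, by
    have := list_sum_nonneg L (fun t => Mc t.1) (fun t ht => (Mc_spec (hWF t ht).1).1)
    linarith, ?_⟩
  intro V hV hVT u hu p hp hreg
  set S := ∑ k ∈ Finset.range (plen+1), ∑ Kf : Fin k → idx,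
      ∑ j : Fin 3, |db j (ZI (List.ofFn Kf) u) p| with hS
  have hSnn : 0 ≤ S := Sa_nonneg plen u p
  have hterm : ∀ t ∈ L, |t.1 p * atomv u t.2 p| ≤ Mc t.1 * (12 * S) := by
    intro t ht
    obtain ⟨hc, hl⟩ := hWF t ht
    have hM := Mc_spec hc
    have hatom : |atomv u t.2 p| ≤ 12 * S := by
      rcases ht2 : t.2 with ⟨b, K⟩ | K
      · rw [ht2] at hl
        have : K.length ≤ plen := le_trans hl hJ
        have h := le_Sa u p K this b
        show |db b (ZI K u) p| ≤ 12 * S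
        rw [← hS] at h
        linarith
      · rw [ht2] at hl
        have hKp : K.length < J.length := hl
        have h := gdt_bound hV hVT hu hp hreg K
        show |gdt (ZI K u) p| ≤ 12 * S
        refine h.trans ?_
        have hb : ∀ b : Fin 3, (|db b (ZI (Sum.inr b :: K) u) p| + |db b (ZI K u) p|
            + |db b (ZI (Sum.inl b.succ :: K) u) p| + |db b (ZI (Sum.inl (0:Fin 4) :: K) u) p|)
            ≤ 4 * S := by
          intro b
          have l1 := le_Sa (plen := plen) u p (Sum.inr b :: K)
            (by simp only [List.length_cons]; omega) b
          have l2 := le_Sa (plen := plen) u p K (by omega) b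
          have l3 := le_Sa (plen := plen) u p (Sum.inl b.succ :: K)
            (by simp only [List.length_cons]; omega) b
          have l4 := le_Sa (plen := plen) u p (Sum.inl (0:Fin 4) :: K)
            (by simp only [List.length_cons]; omega) b
          rw [← hS] at l1 l2 l3 l4
          linarith
        calc (∑ b : Fin 3, (|db b (ZI (Sum.inr b :: K) u) p| + |db b (ZI K u) p|
              + |db b (ZI (Sum.inl b.succ :: K) u) p|
              + |db b (ZI (Sum.inl (0:Fin 4) :: K) u) p|))
            ≤ ∑ _b : Fin 3, 4 * S := Finset.sum_le_sum (fun b _ => hb b)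
          _ = 12 * S := by simp; ring
    rw [abs_mul]
    exact mul_le_mul (hM.2 p hreg) hatom (abs_nonneg _) hM.1
  rw [hrep V hV hVT u hu p hp]
  calc |(L.map (fun t => t.1 p * atomv u t.2 p)).sum|
      ≤ (L.map (fun t => |t.1 p * atomv u t.2 p|)).sum := list_abs_sum _ _
    _ ≤ (L.map (fun t => Mc t.1 * (12 * S))).sum := list_sum_le _ _ _ hterm
    _ = (L.map (fun t => (12 * S) * Mc t.1)).sum := by
        congr 1; apply List.map_congr_left; intro t _; ring
    _ = (12 * S) * (L.map (fun t => Mc t.1)).sum := sum_map_mul_left _ _ _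
    _ = 12 * (L.map (fun t => Mc t.1)).sum * S := by ring

lemma instB (J : List idx) (α : Fin 4) :
    ∃ C : ℝ, 0 ≤ C ∧ ∀ (V : Set (Fin 4 → ℝ)), IsOpen V →
      ∀ u : fn, ContDiffOn ℝ (⊤:ℕ∞) u V → ∀ p ∈ V,
        |ZI J (pd α u) p| ≤ |pd α (ZI J u) p|
          + C * ∑ k ∈ Finset.range J.length, ∑ Jf : Fin k → idx,
              ∑ β : Fin 4, |pd β (ZI (List.ofFn Jf) u) p| := by
  obtain ⟨L, hL, hrep⟩ := repB J α
  refine ⟨(L.map (fun t => |t.1|)).sum,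
    list_sum_nonneg _ _ (fun t _ => abs_nonneg _), ?_⟩
  intro V hV u hu p hp
  set S := ∑ k ∈ Finset.range J.length, ∑ Jf : Fin k → idx,
      ∑ β : Fin 4, |pd β (ZI (List.ofFn Jf) u) p| with hS
  have hSnn : 0 ≤ S := Sb_nonneg _ u p
  rw [hrep V hV u hu p hp]
  have habs : |pd α (ZI J u) p + (L.map (fun t => t.1 * pd t.2.1 (ZI t.2.2 u) p)).sum|
      ≤ |pd α (ZI J u) p| + |(L.map (fun t => t.1 * pd t.2.1 (ZI t.2.2 u) p)).sum| :=
    abs_add_le _ _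
  refine habs.trans ?_
  have h2 : |(L.map (fun t => t.1 * pd t.2.1 (ZI t.2.2 u) p)).sum|
      ≤ (L.map (fun t => |t.1|)).sum * S := by
    calc |(L.map (fun t => t.1 * pd t.2.1 (ZI t.2.2 u) p)).sum|
        ≤ (L.map (fun t => |t.1 * pd t.2.1 (ZI t.2.2 u) p|)).sum := list_abs_sum _ _
      _ ≤ (L.map (fun t => S * |t.1|)).sum := by
          apply list_sum_le
          intro t ht
          rw [abs_mul]
          have := le_Sb u p t.2.2 (hL t ht) t.2.1
          rw [← hS] at this
          calc |t.1| * |pd t.2.1 (ZI t.2.2 u) p| ≤ |t.1| * S :=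
                mul_le_mul_of_nonneg_left this (abs_nonneg _)
            _ = S * |t.1| := by ring
      _ = S * (L.map (fun t => |t.1|)).sum := sum_map_mul_left _ _ _
      _ = _ := by ring
  linarith

end Aux

open Aux

/-- commutator estimates for the full family of fields `Z` in the
region `{|x| ≤ t - 1, t² - |x|² ≥ (B+1)²}`:
(a) `Σ_i Σ_{|J| = p} |Z^J ∂̄_i u| ≤ C Σ_{|K| ≤ p} Σ_j |∂̄_j Z^K u|`;
(b) `|Z^I ∂_α u| ≤ |∂_α Z^I u| + C Σ_{|J| < |I|} Σ_β |∂_β Z^J u|` for `|I| ≤ p`. -/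
theorem Z_commutator_estimates (B : ℝ) (hB : 0 < B) (plen : ℕ) (hp : 1 ≤ plen) :
    ∃ C > (0 : ℝ),
      ∀ U : Set (Fin 4 → ℝ), IsOpen U →
      ∀ u : (Fin 4 → ℝ) → ℝ, ContDiffOn ℝ (⊤ : ℕ∞) u U →
      ∀ p ∈ U, rad p ≤ p 0 - 1 → (B + 1) ^ 2 ≤ (p 0) ^ 2 - rad p ^ 2 →
        (∑ i : Fin 3, ∑ J : Fin plen → Fin 4 ⊕ Fin 3, |ZI (List.ofFn J) (db i u) p|
          ≤ C * ∑ k ∈ Finset.range (plen + 1), ∑ K : Fin k → Fin 4 ⊕ Fin 3,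
              ∑ j : Fin 3, |db j (ZI (List.ofFn K) u) p|)
        ∧ (∀ m : ℕ, m ≤ plen → ∀ I : Fin m → Fin 4 ⊕ Fin 3, ∀ α : Fin 4,
            |ZI (List.ofFn I) (pd α u) p|
              ≤ |pd α (ZI (List.ofFn I) u) p|
                + C * ∑ k ∈ Finset.range m, ∑ J : Fin k → Fin 4 ⊕ Fin 3,
                    ∑ β : Fin 4, |pd β (ZI (List.ofFn J) u) p|) := by
  classical
  have hA : ∀ (i : Fin 3) (Jf : Fin plen → idx), ∃ C : ℝ, 0 ≤ C ∧
      ∀ (V : Set (Fin 4 → ℝ)), IsOpen V → V ⊆ Tpos →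
      ∀ u : fn, ContDiffOn ℝ (⊤:ℕ∞) u V → ∀ p ∈ V, p ∈ Reg →
        |ZI (List.ofFn Jf) (db i u) p| ≤ C * ∑ k ∈ Finset.range (plen+1),
          ∑ Kf : Fin k → idx, ∑ j : Fin 3, |db j (ZI (List.ofFn Kf) u) p| :=
    fun i Jf => instA plen (List.ofFn Jf) (by simp) i
  choose CA hCA0 hCAspec using hA
  have hBc : ∀ (m : ℕ) (If : Fin m → idx) (α : Fin 4), ∃ C : ℝ, 0 ≤ C ∧
      ∀ (V : Set (Fin 4 → ℝ)), IsOpen V →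
      ∀ u : fn, ContDiffOn ℝ (⊤:ℕ∞) u V → ∀ p ∈ V,
        |ZI (List.ofFn If) (pd α u) p| ≤ |pd α (ZI (List.ofFn If) u) p|
          + C * ∑ k ∈ Finset.range (List.ofFn If).length, ∑ Jf : Fin k → idx,
              ∑ β : Fin 4, |pd β (ZI (List.ofFn Jf) u) p| :=
    fun m If α => instB (List.ofFn If) α
  choose CB hCB0 hCBspec using hBc
  set CAt := ∑ i : Fin 3, ∑ Jf : Fin plen → idx, CA i Jf with hCAt
  set CBt := ∑ m ∈ Finset.range (plen+1), ∑ If : Fin m → idx, ∑ α : Fin 4, CB m If α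
    with hCBt
  have hCAt0 : 0 ≤ CAt :=
    Finset.sum_nonneg fun i _ => Finset.sum_nonneg fun Jf _ => hCA0 i Jf
  have hCBt0 : 0 ≤ CBt :=
    Finset.sum_nonneg fun m _ => Finset.sum_nonneg fun If _ =>
      Finset.sum_nonneg fun α _ => hCB0 m If α
  refine ⟨CAt + CBt + 1, by linarith, ?_⟩
  intro U hU u hu p hpU hr1 hr2
  have hrad0 : 0 ≤ rad p := Real.sqrt_nonneg _
  have hp01 : (1:ℝ) ≤ p 0 := by linarith
  have hradsq : rad p ^ 2 = ∑ b : Fin 3, p b.succ ^ 2 :=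
    Real.sq_sqrt (Finset.sum_nonneg fun b _ => sq_nonneg _)
  have hsum : (∑ b : Fin 3, p b.succ ^ 2) ≤ p 0 ^ 2 := by nlinarith
  have hreg : p ∈ Reg := ⟨hp01, hsum⟩
  have hpT : p ∈ Tpos := lt_of_lt_of_le one_pos hp01
  have hW : IsOpen (U ∩ Tpos) := hU.inter isOpen_Tpos
  have hWT : U ∩ Tpos ⊆ Tpos := Set.inter_subset_right
  have hu' : ContDiffOn ℝ (⊤:ℕ∞) u (U ∩ Tpos) := hu.mono Set.inter_subset_left
  have hpW : p ∈ U ∩ Tpos := ⟨hpU, hpT⟩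
  constructor
  · set S := ∑ k ∈ Finset.range (plen + 1), ∑ K : Fin k → Fin 4 ⊕ Fin 3,
        ∑ j : Fin 3, |db j (ZI (List.ofFn K) u) p| with hS
    have hSnn : 0 ≤ S := Sa_nonneg plen u p
    calc ∑ i : Fin 3, ∑ Jf : Fin plen → Fin 4 ⊕ Fin 3, |ZI (List.ofFn Jf) (db i u) p|
        ≤ ∑ i : Fin 3, ∑ Jf : Fin plen → Fin 4 ⊕ Fin 3, CA i Jf * S :=
          Finset.sum_le_sum fun i _ => Finset.sum_le_sum fun Jf _ =>
            hCAspec i Jf (U ∩ Tpos) hW hWT u hu' p hpW hreg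
      _ = CAt * S := by
          rw [hCAt, Finset.sum_mul]
          exact Finset.sum_congr rfl fun i _ => (Finset.sum_mul _ _ _).symm
      _ ≤ (CAt + CBt + 1) * S := mul_le_mul_of_nonneg_right (by linarith) hSnn
  · intro m hm If α
    have hspec := hCBspec m If α U hU u hu p hpU
    simp only [List.length_ofFn] at hspec
    set S := ∑ k ∈ Finset.range m, ∑ Jf : Fin k → Fin 4 ⊕ Fin 3,
        ∑ β : Fin 4, |pd β (ZI (List.ofFn Jf) u) p| with hS
    have hSnn : 0 ≤ S := Sb_nonneg m u p
    have s1 : CB m If α ≤ ∑ α' : Fin 4, CB m If α' :=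
      Finset.single_le_sum (f := fun α' => CB m If α')
        (fun _ _ => hCB0 m If _) (Finset.mem_univ α)
    have s2 : (∑ α' : Fin 4, CB m If α')
        ≤ ∑ If' : Fin m → idx, ∑ α' : Fin 4, CB m If' α' :=
      Finset.single_le_sum (f := fun If' => ∑ α' : Fin 4, CB m If' α')
        (fun If' _ => Finset.sum_nonneg fun α' _ => hCB0 m If' α') (Finset.mem_univ If)
    have s3 : (∑ If' : Fin m → idx, ∑ α' : Fin 4, CB m If' α') ≤ CBt :=
      Finset.single_le_sum
        (f := fun m' => ∑ If' : Fin m' → idx, ∑ α' : Fin 4, CB m' If' α')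
        (fun m' _ => Finset.sum_nonneg fun If' _ =>
          Finset.sum_nonneg fun α' _ => hCB0 m' If' α')
        (Finset.mem_range.mpr (Nat.lt_succ_of_le hm))
    have hle : CB m If α ≤ CAt + CBt + 1 := by linarith
    have := mul_le_mul_of_nonneg_right hle hSnn
    linarith [hspec]
end
end
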